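/- Let f ∈ E nonzero and φ ∈ X. Define f^{*φ}(x,v) = f*(a_φ(|v|²/2+φ(x))) when |v|²/2+φ(x) < 0 and 0 otherwise, where f* is the Schwarz symmetric decreasing rearrangement of f on ℝ₊. Then f^{*φ} is equimeasurable with f: for every s > 0, meas{f^{*φ} > s} = meas{f > s}. -/

import Mathlib

open MeasureTheory Real Filter Set ENNReal

noncomputable section

abbrev R3 := EuclideanSpace ℝ (Fin 3)

def mX (φ : R3 → ℝ) : ℝ := ⨅ x : R3, (1 + ‖x‖) * |φ x|

def memX (φ : R3 → ℝ) : Prop :=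
  Continuous φ ∧ (∀ x, φ x ≤ 0) ∧ Tendsto φ (cocompact R3) (nhds 0) ∧
    Integrable (fun x => ‖fderiv ℝ φ x‖ ^ 2) ∧ 0 < mX φ

def memE (f : R3 × R3 → ℝ) : Prop :=
  (∀ p, 0 ≤ f p) ∧ Integrable f ∧ MemLp f ⊤ volume ∧
    Integrable (fun p : R3 × R3 => ‖p.2‖ ^ 2 * f p)

def aphi (φ : R3 → ℝ) (e : ℝ) : ℝ :=
  (8 * π * Real.sqrt 2 / 3) * ∫ x : R3, (max (e - φ x) 0) ^ ((3 : ℝ) / 2)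

/-- Distribution function `μ_f(s) = meas{f > s}`. -/
def distFun (f : R3 × R3 → ℝ) (s : ℝ) : ℝ≥0∞ := volume {p : R3 × R3 | f p > s}

/-- Schwarz symmetric decreasing rearrangement on `ℝ₊`. -/
def schwarz (f : R3 × R3 → ℝ) (t : ℝ) : ℝ :=
  sInf {s : ℝ | 0 ≤ s ∧ distFun f s ≤ ENNReal.ofReal t}

/-- The generalized rearrangement `f^{*φ}` with respect to the microscopic energy. -/
def genRearr (f : R3 × R3 → ℝ) (φ : R3 → ℝ) (p : R3 × R3) : ℝ :=
  if ‖p.2‖ ^ 2 / 2 + φ p.1 < 0 then schwarz f (aphi φ (‖p.2‖ ^ 2 / 2 + φ p.1)) else 0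

/-! ### Auxiliary lemmas -/

lemma gamma52 : Real.Gamma ((3:ℝ) / 2 + 1) = 3 / 4 * Real.sqrt π := by
  rw [Real.Gamma_add_one (by norm_num)]
  have : (3:ℝ)/2 = 1/2 + 1 := by norm_num
  rw [this, Real.Gamma_add_one (by norm_num), Real.Gamma_one_half_eq]
  ring

lemma ball_vol (a : ℝ) : volume {v : R3 | ‖v‖ ^ 2 / 2 < a}
    = ENNReal.ofReal ((8 * π * Real.sqrt 2 / 3) * (max a 0) ^ ((3:ℝ)/2)) := by
  rcases le_or_gt a 0 with ha | ha
  · have : {v : R3 | ‖v‖ ^ 2 / 2 < a} = ∅ := by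
      ext v; simp only [mem_setOf_eq, mem_empty_iff_false, iff_false, not_lt]
      nlinarith [sq_nonneg ‖v‖]
    rw [this, measure_empty, max_eq_right ha, Real.zero_rpow (by norm_num), mul_zero,
      ENNReal.ofReal_zero]
  · have hset : {v : R3 | ‖v‖ ^ 2 / 2 < a} = Metric.ball (0 : R3) (Real.sqrt (2 * a)) := by
      ext v
      simp only [mem_setOf_eq, Metric.mem_ball, dist_zero_right]
      rw [show ‖v‖ ^ 2 / 2 < a ↔ ‖v‖ ^ 2 < 2 * a by constructor <;> intro <;> linarith,
        ← Real.lt_sqrt (norm_nonneg v)]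
    rw [hset, EuclideanSpace.volume_ball]
    have hgamma : Real.Gamma ((Fintype.card (Fin 3) : ℝ) / 2 + 1) = 3 / 4 * Real.sqrt π := by
      rw [show ((Fintype.card (Fin 3) : ℝ)) = 3 by simp]; exact gamma52
    rw [hgamma, show Fintype.card (Fin 3) = 3 from by simp]
    have h2a : (0:ℝ) ≤ 2 * a := by linarith
    rw [← ENNReal.ofReal_pow (Real.sqrt_nonneg _), ← ENNReal.ofReal_mul (by positivity)]
    congr 1
    rw [max_eq_left ha.le]
    have h1 : Real.sqrt (2 * a) ^ 3 = (2 * a) ^ ((3:ℝ)/2) := by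
      rw [Real.sqrt_eq_rpow, ← Real.rpow_natCast ((2*a) ^ ((1:ℝ)/2)) 3, ← Real.rpow_mul h2a]
      norm_num
    have h2 : (2 * a) ^ ((3:ℝ)/2) = 2 ^ ((3:ℝ)/2) * a ^ ((3:ℝ)/2) :=
      Real.mul_rpow (by norm_num) ha.le
    have h3 : (2:ℝ) ^ ((3:ℝ)/2) = 2 * Real.sqrt 2 := by
      rw [show (3:ℝ)/2 = 1 + 1/2 by norm_num, Real.rpow_add (by norm_num), Real.rpow_one,
        Real.sqrt_eq_rpow]
    have h4 : Real.sqrt π ^ 3 = π * Real.sqrt π := by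
      rw [pow_succ, sq_sqrt Real.pi_nonneg]
    rw [h1, h2, h3, h4]
    have hsp : Real.sqrt π ≠ 0 := by positivity
    field_simp
    ring

lemma sphere_vol (a : ℝ) : volume {v : R3 | ‖v‖ ^ 2 / 2 = a} = 0 := by
  rcases lt_or_ge a 0 with ha | ha
  · have : {v : R3 | ‖v‖ ^ 2 / 2 = a} = ∅ := by
      ext v; simp only [mem_setOf_eq, mem_empty_iff_false, iff_false]
      intro h; nlinarith [sq_nonneg ‖v‖]
    simp [this]
  · refine measure_mono_null (t := Metric.sphere (0:R3) (Real.sqrt (2*a))) ?_ ?_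
    · intro v hv
      simp only [mem_setOf_eq] at hv
      simp only [mem_sphere_iff_norm, sub_zero]
      rw [show (2:ℝ)*a = ‖v‖^2 by linarith, Real.sqrt_sq (norm_nonneg v)]
    · exact Measure.addHaar_sphere volume _ _

variable {φ : R3 → ℝ} {f : R3 × R3 → ℝ}

lemma energy_cont (hc : Continuous φ) :
    Continuous (fun p : R3 × R3 => ‖p.2‖ ^ 2 / 2 + φ p.1) := by
  fun_prop

lemma fubini_lt (hc : Continuous φ) (e : ℝ) :
    volume {p : R3 × R3 | ‖p.2‖ ^ 2 / 2 + φ p.1 < e}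
      = ∫⁻ x : R3, ENNReal.ofReal ((8 * π * Real.sqrt 2 / 3) * (max (e - φ x) 0) ^ ((3:ℝ)/2)) := by
  have hmeas : MeasurableSet {p : R3 × R3 | ‖p.2‖ ^ 2 / 2 + φ p.1 < e} :=
    measurableSet_lt (energy_cont hc).measurable measurable_const
  rw [Measure.volume_eq_prod R3 R3, Measure.prod_apply hmeas]
  congr 1
  ext x
  have : (Prod.mk x ⁻¹' {p : R3 × R3 | ‖p.2‖ ^ 2 / 2 + φ p.1 < e})
      = {v : R3 | ‖v‖ ^ 2 / 2 < e - φ x} := by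
    ext v; simp only [mem_preimage, mem_setOf_eq]; constructor <;> intro <;> linarith
  rw [this, ball_vol]

lemma fubini_eq (hc : Continuous φ) (e : ℝ) :
    volume {p : R3 × R3 | ‖p.2‖ ^ 2 / 2 + φ p.1 = e} = 0 := by
  have hmeas : MeasurableSet {p : R3 × R3 | ‖p.2‖ ^ 2 / 2 + φ p.1 = e} :=
    measurableSet_eq_fun (energy_cont hc).measurable measurable_const
  rw [Measure.volume_eq_prod R3 R3, Measure.prod_apply hmeas]
  rw [show (0:ℝ≥0∞) = ∫⁻ _ : R3, 0 from (lintegral_zero).symm]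
  congr 1
  ext x
  have : (Prod.mk x ⁻¹' {p : R3 × R3 | ‖p.2‖ ^ 2 / 2 + φ p.1 = e})
      = {v : R3 | ‖v‖ ^ 2 / 2 = e - φ x} := by
    ext v; simp only [mem_preimage, mem_setOf_eq]; constructor <;> intro <;> linarith
  rw [this, sphere_vol]

lemma compact_sublevel (hc : Continuous φ) (hten : Tendsto φ (cocompact R3) (nhds 0))
    {e : ℝ} (he : e < 0) : IsCompact {x : R3 | φ x ≤ e} := by
  have h1 : Ioi e ∈ nhds (0:ℝ) := Ioi_mem_nhds he
  have h2 : φ ⁻¹' (Ioi e) ∈ cocompact R3 := hten h1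
  rw [mem_cocompact] at h2
  obtain ⟨K, hK, hKsub⟩ := h2
  refine hK.of_isClosed_subset (isClosed_le hc continuous_const) ?_
  intro x hx
  by_contra hxK
  exact absurd (hKsub hxK) (by simpa using hx)

lemma integrable_max_rpow (hc : Continuous φ) (hten : Tendsto φ (cocompact R3) (nhds 0))
    {e : ℝ} (he : e < 0) :
    Integrable (fun x : R3 => (max (e - φ x) 0) ^ ((3:ℝ)/2)) := by
  have hcont : Continuous (fun x : R3 => (max (e - φ x) 0) ^ ((3:ℝ)/2)) := by
    apply Continuous.rpow_const ((continuous_const.sub hc).max continuous_const)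
    intro x; right; norm_num
  apply hcont.integrable_of_hasCompactSupport
  apply HasCompactSupport.of_support_subset_isCompact (compact_sublevel hc hten he)
  intro x hx
  simp only [Function.mem_support] at hx
  simp only [mem_setOf_eq]
  by_contra h
  push_neg at h
  apply hx
  rw [max_eq_right (by linarith), Real.zero_rpow (by norm_num)]

lemma aphi_nonneg (e : ℝ) : 0 ≤ aphi φ e := by
  apply mul_nonneg (by positivity)
  apply integral_nonneg
  intro x
  exact Real.rpow_nonneg (le_max_right _ _) _

lemma vol_lt_eq (hc : Continuous φ) (hten : Tendsto φ (cocompact R3) (nhds 0))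
    {e : ℝ} (he : e < 0) :
    volume {p : R3 × R3 | ‖p.2‖ ^ 2 / 2 + φ p.1 < e} = ENNReal.ofReal (aphi φ e) := by
  rw [fubini_lt hc e]
  have hint : Integrable (fun x : R3 =>
      (8 * π * Real.sqrt 2 / 3) * (max (e - φ x) 0) ^ ((3:ℝ)/2)) :=
    (integrable_max_rpow hc hten he).const_mul _
  rw [← ofReal_integral_eq_lintegral_ofReal hint ?_]
  · rw [aphi, MeasureTheory.integral_const_mul]
  · filter_upwards with x
    exact mul_nonneg (by positivity) (Real.rpow_nonneg (le_max_right _ _) _)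

lemma phi_lower (hm : 0 < mX φ) (x : R3) : mX φ / (1 + ‖x‖) ≤ |φ x| := by
  have hb : BddBelow (Set.range fun x : R3 => (1 + ‖x‖) * |φ x|) := by
    refine ⟨0, ?_⟩
    rintro _ ⟨y, rfl⟩
    positivity
  have h := ciInf_le hb x
  rw [div_le_iff₀ (by positivity)]
  calc mX φ ≤ (1 + ‖x‖) * |φ x| := h
    _ = |φ x| * (1 + ‖x‖) := by ring

lemma vol_neg_top (hneg : ∀ x, φ x ≤ 0) (hm : 0 < mX φ) :
    volume {p : R3 × R3 | ‖p.2‖ ^ 2 / 2 + φ p.1 < 0} = ⊤ := by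
  set m := mX φ with hmdef
  set c : ℝ := 8 * π * Real.sqrt 2 / 3 with hc
  have hcpos : 0 < c := by positivity
  set K : ℝ := c * c * (m / 4) ^ ((3:ℝ)/2) with hK
  have hKpos : 0 < K := by positivity
  have key : ∀ n : ℕ, 1 ≤ n → ENNReal.ofReal (K * n) ≤
      volume {p : R3 × R3 | ‖p.2‖ ^ 2 / 2 + φ p.1 < 0} := by
    intro n hn
    have hn1 : (1:ℝ) ≤ (n:ℝ) := by exact_mod_cast hn
    have hsub : ({x : R3 | ‖x‖ ^ 2 / 2 < (n:ℝ)^2/2} ×ˢ {v : R3 | ‖v‖ ^ 2 / 2 < m / (1 + n)})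
        ⊆ {p : R3 × R3 | ‖p.2‖ ^ 2 / 2 + φ p.1 < 0} := by
      rintro ⟨x, v⟩ ⟨hx, hv⟩
      simp only [mem_setOf_eq] at hx hv ⊢
      have hxn : ‖x‖ < n := by
        nlinarith [norm_nonneg x]
      have h1 : m / (1 + (n:ℝ)) ≤ m / (1 + ‖x‖) := by
        apply div_le_div_of_nonneg_left hm.le (by positivity) (by linarith)
      have h2 : m / (1 + ‖x‖) ≤ |φ x| := phi_lower hm x
      have h3 : |φ x| = -φ x := abs_of_nonpos (hneg x)
      linarith
    calc ENNReal.ofReal (K * n)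
        ≤ volume ({x : R3 | ‖x‖ ^ 2 / 2 < (n:ℝ)^2/2} ×ˢ {v : R3 | ‖v‖ ^ 2 / 2 < m / (1 + n)}) := by
          rw [Measure.volume_eq_prod, Measure.prod_prod, ball_vol, ball_vol,
            ← ENNReal.ofReal_mul (by positivity)]
          apply ENNReal.ofReal_le_ofReal
          have hmax1 : max ((n:ℝ)^2/2) 0 = (n:ℝ)^2/2 := max_eq_left (by positivity)
          have hmax2 : max (m / (1 + (n:ℝ))) 0 = m / (1 + (n:ℝ)) := max_eq_left (by positivity)
          rw [hmax1, hmax2]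
          have hprod : (c * ((n:ℝ)^2/2) ^ ((3:ℝ)/2)) * (c * (m / (1 + (n:ℝ))) ^ ((3:ℝ)/2))
              = c * c * ((n:ℝ)^2/2 * (m / (1 + (n:ℝ)))) ^ ((3:ℝ)/2) := by
            rw [Real.mul_rpow (by positivity) (by positivity)]; ring
          rw [hprod]
          have hne : (n:ℝ) ≠ 0 := by positivity
          have hne2 : (1:ℝ) + (n:ℝ) ≠ 0 := by positivity
          have harg : m / 4 * (n:ℝ) ≤ (n:ℝ)^2/2 * (m / (1 + (n:ℝ))) := by
            have h0 : m * (n:ℝ)^2 / (2*(2*(n:ℝ))) ≤ m * (n:ℝ)^2 / (2*(1+(n:ℝ))) :=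
              div_le_div_of_nonneg_left (by positivity) (by positivity) (by linarith)
            have e1 : m * (n:ℝ)^2 / (2*(2*(n:ℝ))) = m / 4 * (n:ℝ) := by
              field_simp; ring
            have e2 : (n:ℝ)^2/2 * (m / (1 + (n:ℝ))) = m * (n:ℝ)^2 / (2*(1+(n:ℝ))) := by
              field_simp
            rw [e1] at h0; rw [e2]; exact h0
          have hrpow : (m / 4 * (n:ℝ)) ^ ((3:ℝ)/2)
              ≤ ((n:ℝ)^2/2 * (m / (1 + (n:ℝ)))) ^ ((3:ℝ)/2) :=
            Real.rpow_le_rpow (by positivity) harg (by norm_num)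
          have hsplit : (m / 4 * (n:ℝ)) ^ ((3:ℝ)/2)
              = (m / 4) ^ ((3:ℝ)/2) * (n:ℝ) ^ ((3:ℝ)/2) :=
            Real.mul_rpow (by positivity) (by positivity)
          have hn32 : (n:ℝ) ≤ (n:ℝ) ^ ((3:ℝ)/2) := by
            nth_rewrite 1 [← Real.rpow_one (n:ℝ)]
            exact Real.rpow_le_rpow_of_exponent_le hn1 (by norm_num)
          rw [hK]
          nlinarith [Real.rpow_nonneg (show (0:ℝ) ≤ m/4 by positivity) ((3:ℝ)/2),
            Real.rpow_nonneg (show (0:ℝ) ≤ (n:ℝ) by positivity) ((3:ℝ)/2)]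
      _ ≤ volume {p : R3 × R3 | ‖p.2‖ ^ 2 / 2 + φ p.1 < 0} := measure_mono hsub
  by_contra h
  obtain ⟨n, hn⟩ := exists_nat_gt
    (max 1 ((volume {p : R3 × R3 | ‖p.2‖ ^ 2 / 2 + φ p.1 < 0}).toReal / K))
  have hn1 : 1 ≤ n := by
    have h1 := (max_le_iff.1 hn.le).1
    exact_mod_cast Nat.one_le_iff_ne_zero.2 (by rintro rfl; simp at h1; linarith)
  have h2 := key n hn1
  have h3 : K * n ≤ (volume {p : R3 × R3 | ‖p.2‖ ^ 2 / 2 + φ p.1 < 0}).toReal := by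
    rw [← ENNReal.ofReal_le_iff_le_toReal h] at *
    exact h2
  have h4 : (volume {p : R3 × R3 | ‖p.2‖ ^ 2 / 2 + φ p.1 < 0}).toReal / K < n :=
    lt_of_le_of_lt (le_max_right _ _) hn
  rw [div_lt_iff₀ hKpos] at h4
  nlinarith

/-! ### Distribution function lemmas -/

lemma distFun_antitone : Antitone (distFun f) := by
  intro s s' h
  exact measure_mono (fun p (hp : f p > s') => lt_of_le_of_lt h hp)

lemma distFun_rightCont {s : ℝ} {t : ℝ≥0∞}
    (h : t < distFun f s) : ∃ s' > s, t < distFun f s' := by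
  have hU : {p : R3 × R3 | f p > s} = ⋃ n : ℕ, {p : R3 × R3 | f p > s + 1/(n+1)} := by
    ext p
    simp only [mem_setOf_eq, mem_iUnion]
    constructor
    · intro hp
      obtain ⟨n, hn⟩ := exists_nat_one_div_lt (sub_pos.2 hp)
      exact ⟨n, by linarith⟩
    · rintro ⟨n, hn⟩
      have : (0:ℝ) < 1/(n+1) := by positivity
      linarith
  have hdir : Directed (· ⊆ ·) (fun n : ℕ => {p : R3 × R3 | f p > s + 1/(n+1)}) := by
    apply Monotone.directed_le
    intro n m hnm p hp
    simp only [mem_setOf_eq] at hp ⊢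
    have h1 : (1:ℝ)/(m+1) ≤ 1/(n+1) := by
      apply div_le_div_of_nonneg_left one_pos.le (by positivity)
      have : (n:ℝ) ≤ m := Nat.cast_le.2 hnm
      linarith
    linarith
  rw [show distFun f s = volume {p : R3 × R3 | f p > s} from rfl, hU,
    hdir.measure_iUnion] at h
  obtain ⟨n, hn⟩ := lt_iSup_iff.1 h
  exact ⟨s + 1/(n+1), by linarith [show (0:ℝ) < 1/((n:ℝ)+1) by positivity], hn⟩

lemma distFun_eventually_zero (hf : MemLp f ⊤ volume) :
    ∃ M : ℝ, 0 ≤ M ∧ distFun f M = 0 := by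
  refine ⟨(eLpNorm f ⊤ volume).toReal, ENNReal.toReal_nonneg, ?_⟩
  have hae : ∀ᵐ p ∂(volume : Measure (R3 × R3)),
      (‖f p‖₊ : ℝ≥0∞) ≤ eLpNormEssSup f volume := enorm_ae_le_eLpNormEssSup f volume
  have htop : eLpNormEssSup f volume ≠ ⊤ := by
    have := hf.2
    rwa [eLpNorm_exponent_top, lt_top_iff_ne_top] at this
  apply measure_mono_null (t := {p : R3 × R3 | ¬ ((‖f p‖₊ : ℝ≥0∞) ≤ eLpNormEssSup f volume)})
  · intro p hp
    simp only [mem_setOf_eq] at hp ⊢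
    intro hle
    have h1 : f p ≤ ‖f p‖ := le_abs_self _
    have h2 : (‖f p‖₊ : ℝ≥0∞).toReal = ‖f p‖ := by simp
    have h3 : (‖f p‖₊ : ℝ≥0∞).toReal ≤ (eLpNormEssSup f volume).toReal :=
      ENNReal.toReal_mono htop hle
    rw [h2] at h3
    rw [eLpNorm_exponent_top] at hp
    linarith
  · exact ae_iff.1 hae

lemma schwarz_gt_iff (hf : MemLp f ⊤ volume) {t : ℝ} {s : ℝ} (hs : 0 < s) :
    schwarz f t > s ↔ ENNReal.ofReal t < distFun f s := by
  set S := {s' : ℝ | 0 ≤ s' ∧ distFun f s' ≤ ENNReal.ofReal t} with hS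
  have hbdd : BddBelow S := ⟨0, fun s' hs' => hs'.1⟩
  obtain ⟨M, hM0, hMz⟩ := distFun_eventually_zero hf
  have hMS : M ∈ S := ⟨hM0, by rw [hMz]; exact zero_le⟩
  constructor
  · intro hgt
    by_contra hle
    push_neg at hle
    have hsS : s ∈ S := ⟨hs.le, hle⟩
    have := csInf_le hbdd hsS
    rw [schwarz] at hgt
    linarith
  · intro hlt
    obtain ⟨s', hs's, hs'⟩ := distFun_rightCont hlt
    have hlb : ∀ x ∈ S, s' ≤ x := by
      intro x hx
      by_contra hxs
      push_neg at hxs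
      exact absurd (distFun_antitone hxs.le) (not_le.2 (lt_of_le_of_lt hx.2 hs'))
    have : s' ≤ sInf S := le_csInf ⟨M, hMS⟩ hlb
    rw [schwarz]
    exact lt_of_lt_of_le hs's this

lemma distFun_lt_top (hf : Integrable f) {s : ℝ} (hs : 0 < s) : distFun f s ≠ ⊤ := by
  intro htop
  have hmarkov := mul_meas_ge_le_lintegral₀
    (hf.aemeasurable.ennreal_ofReal) (ENNReal.ofReal s)
  have hsub : {p : R3 × R3 | f p > s} ⊆ {p : R3 × R3 | ENNReal.ofReal s ≤ ENNReal.ofReal (f p)} :=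
    fun p hp => ENNReal.ofReal_le_ofReal (le_of_lt hp)
  have h1 : (⊤ : ℝ≥0∞) ≤ volume {p : R3 × R3 | ENNReal.ofReal s ≤ ENNReal.ofReal (f p)} := by
    rw [← htop]; exact measure_mono hsub
  have h2 : ENNReal.ofReal s * ⊤ ≤ ∫⁻ p, ENNReal.ofReal (f p) :=
    le_trans (mul_le_mul_right h1 (ENNReal.ofReal s)) hmarkov
  have h3 : ENNReal.ofReal s * ⊤ = ⊤ :=
    ENNReal.mul_top (by simpa using hs)
  rw [h3, top_le_iff] at h2
  exact absurd h2 (ne_of_lt hf.lintegral_lt_top)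

/-! ### Main theorem -/

theorem genRearr_equimeasurable (f : R3 × R3 → ℝ) (hf : memE f)
    (hne : ¬ (f =ᵐ[volume] 0)) (φ : R3 → ℝ) (hφ : memX φ) :
    ∀ s : ℝ, 0 < s →
      volume {p : R3 × R3 | genRearr f φ p > s} = volume {p : R3 × R3 | f p > s} := by
  intro s hs
  obtain ⟨hfpos, hfint, hfinf, -⟩ := hf
  obtain ⟨hφc, hφneg, hφten, -, hφm⟩ := hφ
  set en : R3 × R3 → ℝ := fun p => ‖p.2‖ ^ 2 / 2 + φ p.1 with hen
  set μ : ℝ≥0∞ := distFun f s with hμ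
  have hμtop : μ ≠ ⊤ := distFun_lt_top hfint hs
  -- Step 1 : rewrite the left set
  have hL : {p : R3 × R3 | genRearr f φ p > s}
      = {p : R3 × R3 | en p < 0 ∧ ENNReal.ofReal (aphi φ (en p)) < μ} := by
    ext p
    simp only [mem_setOf_eq, genRearr]
    rcases lt_or_ge (‖p.2‖ ^ 2 / 2 + φ p.1) 0 with hneg | hpos
    · rw [if_pos hneg]
      rw [schwarz_gt_iff hfinf hs]
      exact ⟨fun h => ⟨hneg, h⟩, fun h => h.2⟩
    · rw [if_neg (not_lt.2 hpos)]
      constructor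
      · intro h; linarith
      · intro h; exact absurd h.1 (not_lt.2 hpos)
  rw [hL]
  show volume {p : R3 × R3 | en p < 0 ∧ ENNReal.ofReal (aphi φ (en p)) < μ} = μ
  rcases eq_or_ne μ 0 with hμ0 | hμ0
  · rw [hμ0]
    convert measure_empty (μ := (volume : Measure (R3 × R3)))
    ext p
    simp only [mem_setOf_eq, mem_empty_iff_false, iff_false, not_and, hμ0]
    intro _
    simp
  -- now 0 < μ
  have hμpos : 0 < μ := pos_iff_ne_zero.2 hμ0
  set S : Set ℝ := {e : ℝ | e < 0 ∧ volume {p : R3 × R3 | en p < e} < μ} with hSdef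
  have hSne : S.Nonempty := by
    -- φ is bounded below
    obtain ⟨K, hK, hKsub⟩ := mem_cocompact.1 (hφten (Ioi_mem_nhds (show (-1:ℝ) < 0 by norm_num)))
    have hbd : BddBelow (φ '' K) := (hK.image hφc).bddBelow
    obtain ⟨b, hb⟩ := hbd
    set elow : ℝ := min b (-1) - 1 with helow
    have helowneg : elow < 0 := by
      have : min b (-1) ≤ -1 := min_le_right _ _
      simp only [helow]; linarith
    have hlow : ∀ x, elow < φ x := by
      intro x
      by_cases hxK : x ∈ K
      · have : b ≤ φ x := hb ⟨x, hxK, rfl⟩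
        have : min b (-1) ≤ b := min_le_left _ _
        simp only [helow]; linarith [hb ⟨x, hxK, rfl⟩]
      · have h1 : (-1:ℝ) < φ x := hKsub hxK
        have h2 : min b (-1) ≤ -1 := min_le_right _ _
        simp only [helow]; linarith
    refine ⟨elow, helowneg, ?_⟩
    rw [vol_lt_eq hφc hφten helowneg]
    have : aphi φ elow = 0 := by
      rw [aphi]
      have : ∀ x : R3, (max (elow - φ x) 0) ^ ((3:ℝ)/2) = 0 := by
        intro x
        rw [max_eq_right (by linarith [hlow x]), Real.zero_rpow (by norm_num)]
      simp only [this, integral_zero, mul_zero]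
    rw [this, ENNReal.ofReal_zero]
    exact hμpos
  have hSbdd : BddAbove S := ⟨0, fun e he => he.1.le⟩
  -- membership in S is downward closed
  have hSlow : ∀ e e' : ℝ, e < e' → e' ∈ S → e < 0 → e ∈ S := by
    intro e e' hee' he' he0
    exact ⟨he0, lt_of_le_of_lt
      (measure_mono (fun p (hp : en p < e) => lt_trans hp hee')) he'.2⟩
  set e₀ : ℝ := sSup S with he₀def
  have he₀le : e₀ ≤ 0 := csSup_le hSne (fun e he => he.1.le)
  have hmem : ∀ e : ℝ, e < e₀ → e < 0 → e ∈ S := by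
    intro e he he0
    obtain ⟨e', he'S, hee'⟩ := exists_lt_of_lt_csSup hSne he
    exact hSlow e e' hee' he'S he0
  have he₀neg : e₀ < 0 := by
    rcases lt_or_ge e₀ 0 with h | h
    · exact h
    · exfalso
      have he₀0 : e₀ = 0 := le_antisymm he₀le h
      -- then volume {en < 0} ≤ μ, contradicting vol_neg_top
      have hU : {p : R3 × R3 | en p < 0} = ⋃ n : ℕ, {p : R3 × R3 | en p < -(1/(n+1))} := by
        ext p
        simp only [mem_setOf_eq, mem_iUnion]
        constructor
        · intro hp
          obtain ⟨n, hn⟩ := exists_nat_one_div_lt (show (0:ℝ) < -(en p) by linarith)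
          exact ⟨n, by linarith⟩
        · rintro ⟨n, hn⟩
          have h0 : -(1/((n:ℝ)+1)) < 0 := neg_lt_zero.2 (by positivity)
          exact lt_trans hn h0
      have hdir : Directed (· ⊆ ·) (fun n : ℕ => {p : R3 × R3 | en p < -(1/(n+1))}) := by
        apply Monotone.directed_le
        intro n m hnm p hp
        simp only [mem_setOf_eq] at hp ⊢
        have h1 : (1:ℝ)/(m+1) ≤ 1/(n+1) := by
          apply div_le_div_of_nonneg_left one_pos.le (by positivity)
          have : (n:ℝ) ≤ m := Nat.cast_le.2 hnm
          linarith
        linarith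
      have hle : volume {p : R3 × R3 | en p < 0} ≤ μ := by
        rw [hU, hdir.measure_iUnion]
        apply iSup_le
        intro n
        have hneg : -(1/((n:ℝ)+1)) < 0 := by
          have : (0:ℝ) < 1/((n:ℝ)+1) := by positivity
          linarith
        exact (hmem _ (by rw [he₀0]; exact hneg) hneg).2.le
      rw [vol_neg_top hφneg hφm] at hle
      exact hμtop (top_le_iff.1 hle)
  -- A = volume of strict sublevel at e₀, B = volume of closed sublevel
  have hA : volume {p : R3 × R3 | en p < e₀} ≤ μ := by
    have hU : {p : R3 × R3 | en p < e₀} = ⋃ n : ℕ, {p : R3 × R3 | en p < e₀ - 1/(n+1)} := by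
      ext p
      simp only [mem_setOf_eq, mem_iUnion]
      constructor
      · intro hp
        obtain ⟨n, hn⟩ := exists_nat_one_div_lt (show (0:ℝ) < e₀ - en p by linarith)
        exact ⟨n, by linarith⟩
      · rintro ⟨n, hn⟩
        have h0 : e₀ - 1/((n:ℝ)+1) ≤ e₀ := by
          have : (0:ℝ) < 1/((n:ℝ)+1) := by positivity
          linarith
        exact lt_of_lt_of_le hn h0
    have hdir : Directed (· ⊆ ·) (fun n : ℕ => {p : R3 × R3 | en p < e₀ - 1/(n+1)}) := by
      apply Monotone.directed_le
      intro n m hnm p hp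
      simp only [mem_setOf_eq] at hp ⊢
      have h1 : (1:ℝ)/(m+1) ≤ 1/(n+1) := by
        apply div_le_div_of_nonneg_left one_pos.le (by positivity)
        have : (n:ℝ) ≤ m := Nat.cast_le.2 hnm
        linarith
      linarith
    rw [hU, hdir.measure_iUnion]
    apply iSup_le
    intro n
    have h1 : (0:ℝ) < 1/((n:ℝ)+1) := by positivity
    exact (hmem _ (by linarith) (by linarith)).2.le
  have hB : μ ≤ volume {p : R3 × R3 | en p ≤ e₀} := by
    have hI : {p : R3 × R3 | en p ≤ e₀}
        = ⋂ n : ℕ, {p : R3 × R3 | en p < e₀ + (-e₀)/(n+2)} := by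
      ext p
      simp only [mem_setOf_eq, mem_iInter]
      constructor
      · intro hp n
        have h0 : e₀ < e₀ + (-e₀)/((n:ℝ)+2) := by
          have : (0:ℝ) < (-e₀)/((n:ℝ)+2) := div_pos (by linarith) (by positivity)
          linarith
        exact lt_of_le_of_lt hp h0
      · intro hp
        by_contra hgt
        push_neg at hgt
        set d : ℝ := en p - e₀ with hd
        have hdpos : 0 < d := by simp only [hd]; linarith
        obtain ⟨n, hn⟩ := exists_nat_gt ((-e₀)/d)
        have hn2 : (-e₀)/d < (n:ℝ) + 2 := by linarith
        have : (-e₀)/((n:ℝ)+2) < d := by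
          rw [div_lt_iff₀ (by positivity)]
          rw [div_lt_iff₀ hdpos] at hn2
          linarith
        have := hp n
        simp only [hd] at *
        linarith
    have hmono : ∀ n : ℕ, e₀ + (-e₀)/((n:ℝ)+2) < 0 := by
      intro n
      have h1 : (-e₀)/((n:ℝ)+2) ≤ (-e₀)/2 := by
        apply div_le_div_of_nonneg_left (by linarith) (by norm_num) (by push_cast; linarith)
      linarith
    have hnotS : ∀ n : ℕ, μ ≤ volume {p : R3 × R3 | en p < e₀ + (-e₀)/(n+2)} := by
      intro n
      have hnot : (e₀ + (-e₀)/((n:ℝ)+2)) ∉ S := by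
        intro hmem'
        have := le_csSup hSbdd hmem'
        have hpos : (0:ℝ) < (-e₀)/((n:ℝ)+2) := div_pos (by linarith) (by positivity)
        linarith
      rcases not_and_or.1 hnot with h | h
      · exact absurd (hmono n) h
      · exact not_lt.1 h
    have hdir : Directed (· ⊇ ·) (fun n : ℕ => {p : R3 × R3 | en p < e₀ + (-e₀)/(n+2)}) := by
      apply Antitone.directed_ge
      intro n m hnm p hp
      simp only [mem_setOf_eq] at hp ⊢
      have h1 : (-e₀)/((m:ℝ)+2) ≤ (-e₀)/((n:ℝ)+2) := by
        apply div_le_div_of_nonneg_left (by linarith) (by positivity)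
        have : (n:ℝ) ≤ m := Nat.cast_le.2 hnm
        linarith
      linarith
    have hnm : ∀ n : ℕ, NullMeasurableSet {p : R3 × R3 | en p < e₀ + (-e₀)/(n+2)} volume := by
      intro n
      exact (measurableSet_lt (energy_cont hφc).measurable measurable_const).nullMeasurableSet
    have hfin : ∃ n : ℕ, volume {p : R3 × R3 | en p < e₀ + (-e₀)/((n:ℕ)+2)} ≠ ⊤ := by
      refine ⟨0, ?_⟩
      rw [vol_lt_eq hφc hφten (hmono 0)]
      exact ENNReal.ofReal_ne_top
    rw [hI, Directed.measure_iInter hnm hdir hfin]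
    exact le_iInf hnotS
  -- squeeze
  have hAB : volume {p : R3 × R3 | en p ≤ e₀} ≤ volume {p : R3 × R3 | en p < e₀} := by
    have hsplit : {p : R3 × R3 | en p ≤ e₀}
        ⊆ {p : R3 × R3 | en p < e₀} ∪ {p : R3 × R3 | en p = e₀} := by
      intro p hp
      rw [mem_setOf_eq] at hp
      rcases lt_or_eq_of_le hp with h | h
      · exact Or.inl h
      · exact Or.inr h
    calc volume {p : R3 × R3 | en p ≤ e₀}
        ≤ volume ({p : R3 × R3 | en p < e₀} ∪ {p : R3 × R3 | en p = e₀}) := measure_mono hsplit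
      _ ≤ volume {p : R3 × R3 | en p < e₀} + volume {p : R3 × R3 | en p = e₀} :=
          measure_union_le _ _
      _ = volume {p : R3 × R3 | en p < e₀} := by
          rw [fubini_eq hφc e₀, add_zero]
  have hsub1 : {p : R3 × R3 | en p < e₀}
      ⊆ {p : R3 × R3 | en p < 0 ∧ ENNReal.ofReal (aphi φ (en p)) < μ} := by
    intro p hp
    simp only [mem_setOf_eq] at hp ⊢
    have hp0 : en p < 0 := lt_trans hp he₀neg
    obtain ⟨e', he'S, hpe'⟩ := exists_lt_of_lt_csSup hSne hp
    refine ⟨hp0, ?_⟩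
    rw [← vol_lt_eq hφc hφten hp0]
    exact lt_of_le_of_lt
      (measure_mono (fun q (hq : en q < en p) => lt_trans hq hpe')) he'S.2
  have hsub2 : {p : R3 × R3 | en p < 0 ∧ ENNReal.ofReal (aphi φ (en p)) < μ}
      ⊆ {p : R3 × R3 | en p ≤ e₀} := by
    intro p hp
    simp only [mem_setOf_eq] at hp ⊢
    obtain ⟨hp0, hpμ⟩ := hp
    rw [← vol_lt_eq hφc hφten hp0] at hpμ
    exact le_csSup hSbdd ⟨hp0, hpμ⟩
  have h1 := measure_mono (μ := (volume : Measure (R3 × R3))) hsub1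
  have h2 := measure_mono (μ := (volume : Measure (R3 × R3))) hsub2
  apply le_antisymm
  · exact le_trans h2 (le_trans hAB hA)
  · exact le_trans hB (le_trans hAB h1)
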